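/- Let N > 1 be real, let ε : [1, N] → ℝ be continuous with ε(n) > 0 for all n ∈ [1, N], let g, h ∈ ℝ with h ≠ 0, and let φ : [1, N] → ℂ be continuous and not identically zero. Suppose that for every n ∈ [1, N]: ε(n)·φ(n) = (1/2) ∫_{1}^{N} ( g + i·h·sign(n − m) ) φ(m) dm. Then (g + ih)/(g − ih) = exp( i h ∫_{1}^{N} dt / ε(t) ). -/

import Mathlib

open Complex intervalIntegral MeasureTheory Set Topology Filter

/-- Continuum quantization condition of the Russian doll / inverse Berry–Keating model:
a nontrivial continuous solution of the zero-energy integral equation forces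
`(g+ih)/(g-ih) = exp(ih ∫₁^N dt/ε(t))`. -/
theorem continuum_quantization_condition
    (N : ℝ) (hN : 1 < N)
    (ε : ℝ → ℝ) (hεcont : ContinuousOn ε (Set.Icc 1 N))
    (hεpos : ∀ n ∈ Set.Icc (1 : ℝ) N, 0 < ε n)
    (g h : ℝ) (hh : h ≠ 0)
    (φ : ℝ → ℂ) (hφcont : ContinuousOn φ (Set.Icc 1 N))
    (hφne : ∃ n ∈ Set.Icc (1 : ℝ) N, φ n ≠ 0)
    (heq : ∀ n ∈ Set.Icc (1 : ℝ) N,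
      (ε n : ℂ) * φ n =
        (1 / 2 : ℂ) * ∫ m in (1 : ℝ)..N,
          ((g : ℂ) + Complex.I * (h : ℂ) * (Real.sign (n - m) : ℂ)) * φ m) :
    ((g : ℂ) + Complex.I * h) / ((g : ℂ) - Complex.I * h) =
      Complex.exp (Complex.I * h * ((∫ t in (1 : ℝ)..N, 1 / ε t : ℝ) : ℂ)) := by
  have h1N : (1:ℝ) ≤ N := hN.le
  have h1S : (1:ℝ) ∈ Set.Icc (1:ℝ) N := ⟨le_refl _, h1N⟩
  have hNS : N ∈ Set.Icc (1:ℝ) N := ⟨h1N, le_refl _⟩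
  have hεne : ∀ t ∈ Set.Icc (1:ℝ) N, ε t ≠ 0 := fun t ht => (hεpos t ht).ne'
  have hφmeas : AEStronglyMeasurable φ (volume.restrict (Set.Icc (1:ℝ) N)) :=
    hφcont.aestronglyMeasurable measurableSet_Icc
  have hφint : ∀ a ∈ Set.Icc (1:ℝ) N, ∀ b ∈ Set.Icc (1:ℝ) N,
      IntervalIntegrable φ volume a b := fun a ha b hb =>
    (hφcont.mono (Set.uIcc_subset_Icc ha hb)).intervalIntegrable
  set F : ℝ → ℂ := fun n => ∫ m in (1:ℝ)..n, φ m with hF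
  set C : ℂ := F N with hC
  set c0 : ℂ := (1/2 : ℂ) * ((g:ℂ) - Complex.I * h) * C with hc0
  set ψ : ℝ → ℂ := fun n => Complex.I * h * F n + c0 with hψdef
  -- Step 1: rewrite the integral equation
  have heq' : ∀ n ∈ Set.Icc (1:ℝ) N, (ε n : ℂ) * φ n = ψ n := by
    intro n hn
    obtain ⟨hn1, hnN⟩ := hn
    have hae1 : (fun m => ((g:ℂ) + Complex.I * h) * φ m)
        =ᵐ[volume.restrict (Set.uIoc (1:ℝ) n)]
        (fun m => ((g : ℂ) + Complex.I * (h : ℂ) * (Real.sign (n - m) : ℂ)) * φ m) := by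
      have hne : ∀ᵐ m : ℝ, m ≠ n := by
        refine MeasureTheory.ae_iff.mpr ?_
        have : {a : ℝ | ¬ a ≠ n} = {n} := by ext a; simp
        rw [this]; exact Real.volume_singleton
      filter_upwards [ae_restrict_of_ae hne, ae_restrict_mem measurableSet_uIoc]
        with m hm hmem
      rw [Set.uIoc_of_le hn1] at hmem
      have hmn : m < n := lt_of_le_of_ne hmem.2 hm
      rw [Real.sign_of_pos (by linarith : (0:ℝ) < n - m)]
      push_cast; ring
    have hae2 : (fun m => ((g:ℂ) - Complex.I * h) * φ m)
        =ᵐ[volume.restrict (Set.uIoc n N)]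
        (fun m => ((g : ℂ) + Complex.I * (h : ℂ) * (Real.sign (n - m) : ℂ)) * φ m) := by
      filter_upwards [ae_restrict_mem measurableSet_uIoc] with m hmem
      rw [Set.uIoc_of_le hnN] at hmem
      rw [Real.sign_of_neg (by linarith [hmem.1] : n - m < 0)]
      push_cast; ring
    have int1 : IntervalIntegrable
        (fun m => ((g : ℂ) + Complex.I * (h : ℂ) * (Real.sign (n - m) : ℂ)) * φ m)
        volume 1 n :=
      (((hφint 1 h1S n ⟨hn1, hnN⟩).const_mul _).congr_ae hae1)
    have int2 : IntervalIntegrable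
        (fun m => ((g : ℂ) + Complex.I * (h : ℂ) * (Real.sign (n - m) : ℂ)) * φ m)
        volume n N :=
      (((hφint n ⟨hn1, hnN⟩ N hNS).const_mul _).congr_ae hae2)
    have hsplit := integral_add_adjacent_intervals int1 int2
    have eq1 : (∫ m in (1:ℝ)..n,
        ((g : ℂ) + Complex.I * (h : ℂ) * (Real.sign (n - m) : ℂ)) * φ m)
        = ((g:ℂ) + Complex.I * h) * F n := by
      have hcong : (∫ m in (1:ℝ)..n,
          ((g : ℂ) + Complex.I * (h : ℂ) * (Real.sign (n - m) : ℂ)) * φ m)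
          = ∫ m in (1:ℝ)..n, ((g:ℂ) + Complex.I * h) * φ m := by
        apply intervalIntegral.integral_congr_ae
        have hne : ∀ᵐ m : ℝ, m ≠ n := by
          refine MeasureTheory.ae_iff.mpr ?_
          have : {a : ℝ | ¬ a ≠ n} = {n} := by ext a; simp
          rw [this]; exact Real.volume_singleton
        filter_upwards [hne] with m hm hmem
        rw [Set.uIoc_of_le hn1] at hmem
        have hmn : m < n := lt_of_le_of_ne hmem.2 hm
        rw [Real.sign_of_pos (by linarith : (0:ℝ) < n - m)]
        push_cast; ring
      rw [hcong]
      exact intervalIntegral.integral_const_mul _ _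
    have eq2 : (∫ m in n..N,
        ((g : ℂ) + Complex.I * (h : ℂ) * (Real.sign (n - m) : ℂ)) * φ m)
        = ((g:ℂ) - Complex.I * h) * (C - F n) := by
      have hcong : (∫ m in n..N,
          ((g : ℂ) + Complex.I * (h : ℂ) * (Real.sign (n - m) : ℂ)) * φ m)
          = ∫ m in n..N, ((g:ℂ) - Complex.I * h) * φ m := by
        apply intervalIntegral.integral_congr_ae
        refine Filter.Eventually.of_forall (fun m hmem => ?_)
        rw [Set.uIoc_of_le hnN] at hmem
        rw [Real.sign_of_neg (by linarith [hmem.1] : n - m < 0)]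
        push_cast; ring
      rw [hcong, intervalIntegral.integral_const_mul]
      have hsub : (∫ x in n..N, φ x) = C - F n := by
        rw [hC, hF]
        exact (intervalIntegral.integral_interval_sub_left (hφint 1 h1S N hNS)
          (hφint 1 h1S n ⟨hn1, hnN⟩)).symm
      rw [hsub]
    have := heq n ⟨hn1, hnN⟩
    rw [← hsplit, eq1, eq2] at this
    rw [this, hψdef, hc0]; ring
  -- the energy integral
  have hinvcont : ContinuousOn (fun t => 1 / ε t) (Set.Icc (1:ℝ) N) :=
    ContinuousOn.div continuousOn_const hεcont hεne
  have hinvint : ∀ b ∈ Set.Icc (1:ℝ) N, IntervalIntegrable (fun t => 1 / ε t) volume 1 b :=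
    fun b hb => (hinvcont.mono (Set.uIcc_subset_Icc h1S hb)).intervalIntegrable
  set E : ℝ → ℝ := fun n => ∫ t in (1:ℝ)..n, 1 / ε t with hE
  set Ec : ℝ → ℂ := fun n => ((E n : ℝ) : ℂ) with hEc
  set Φ : ℝ → ℂ := fun n => ψ n * Complex.exp (-(Complex.I * h) * Ec n) with hΦ
  -- derivatives within Ici x for x ∈ Ico 1 N
  have hΦderiv : ∀ x ∈ Set.Ico (1:ℝ) N, HasDerivWithinAt Φ 0 (Set.Ici x) x := by
    intro x hx
    have hxS : x ∈ Set.Icc (1:ℝ) N := ⟨hx.1, hx.2.le⟩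
    have hmem : Set.Icc (1:ℝ) N ∈ 𝓝[>] x := by
      refine mem_nhdsWithin.mpr ⟨Set.Iio N, isOpen_Iio, hx.2, ?_⟩
      rintro y ⟨hy1, hy2⟩
      exact ⟨le_of_lt (lt_of_le_of_lt hx.1 hy2), le_of_lt hy1⟩
    have hFd : HasDerivWithinAt F (φ x) (Set.Ici x) x :=
      intervalIntegral.integral_hasDerivWithinAt_right (hφint 1 h1S x hxS)
        ⟨Set.Icc (1:ℝ) N, hmem, hφmeas⟩
        ((hφcont x hxS).mono_of_mem_nhdsWithin hmem)
    have hEd : HasDerivWithinAt E (1 / ε x) (Set.Ici x) x :=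
      intervalIntegral.integral_hasDerivWithinAt_right (hinvint x hxS)
        ⟨Set.Icc (1:ℝ) N, hmem, hinvcont.aestronglyMeasurable measurableSet_Icc⟩
        ((hinvcont x hxS).mono_of_mem_nhdsWithin hmem)
    have hEcd : HasDerivWithinAt Ec ((1 / ε x : ℝ) : ℂ) (Set.Ici x) x :=
      Complex.ofRealCLM.hasFDerivAt.comp_hasDerivWithinAt x hEd
    have hψd : HasDerivWithinAt ψ (Complex.I * h * φ x) (Set.Ici x) x :=
      ((hFd.const_mul (Complex.I * h)).add_const c0)
    have hexpd : HasDerivWithinAt (fun n => Complex.exp (-(Complex.I * h) * Ec n))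
        (Complex.exp (-(Complex.I * h) * Ec x) * (-(Complex.I * h) * ((1 / ε x : ℝ) : ℂ)))
        (Set.Ici x) x := (hEcd.const_mul (-(Complex.I * h))).cexp
    have hprod := hψd.mul hexpd
    have hzero : Complex.I * h * φ x * Complex.exp (-(Complex.I * h) * Ec x)
        + ψ x * (Complex.exp (-(Complex.I * h) * Ec x) * (-(Complex.I * h) * ((1 / ε x : ℝ) : ℂ)))
        = 0 := by
      have hψx : ψ x = (ε x : ℂ) * φ x := (heq' x hxS).symm
      rw [hψx]
      have hεx : (ε x : ℂ) ≠ 0 := by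
        exact_mod_cast Complex.ofReal_ne_zero.mpr (hεne x hxS)
      push_cast
      field_simp
      ring
    rw [hzero] at hprod
    exact hprod
  -- continuity of Φ on [1, N]
  have hFcont : ContinuousOn F (Set.Icc (1:ℝ) N) := by
    have := intervalIntegral.continuousOn_primitive_interval (μ := volume)
      (a := (1:ℝ)) (b := N) (f := φ)
      (by rw [Set.uIcc_of_le h1N]; exact hφcont.integrableOn_Icc)
    rwa [Set.uIcc_of_le h1N] at this
  have hEcont : ContinuousOn E (Set.Icc (1:ℝ) N) := by
    have := intervalIntegral.continuousOn_primitive_interval (μ := volume)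
      (a := (1:ℝ)) (b := N) (f := fun t => 1 / ε t)
      (by rw [Set.uIcc_of_le h1N]; exact hinvcont.integrableOn_Icc)
    rwa [Set.uIcc_of_le h1N] at this
  have hΦcont : ContinuousOn Φ (Set.Icc (1:ℝ) N) := by
    apply ContinuousOn.mul
    · exact (continuousOn_const.mul hFcont).add continuousOn_const
    · exact (continuousOn_const.mul
        (Complex.continuous_ofReal.comp_continuousOn hEcont)).cexp
  -- Φ is constant
  have hconst := constant_of_has_deriv_right_zero hΦcont hΦderiv
  have hΦ1 : Φ 1 = c0 := by
    simp [hΦ, hψdef, hEc, hE, hF, intervalIntegral.integral_same]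
  have hΦN := hconst N ⟨h1N, le_refl N⟩
  rw [hΦ1] at hΦN
  -- C ≠ 0
  have hCne : C ≠ 0 := by
    intro hC0
    obtain ⟨n, hn, hφn⟩ := hφne
    apply hφn
    have hψn : ψ n = 0 := by
      have hΦn := hconst n hn
      rw [hΦ1, hc0, hC0, mul_zero] at hΦn
      have := Complex.exp_ne_zero (-(Complex.I * h) * Ec n)
      rw [hΦ] at hΦn
      simp only at hΦn
      rcases mul_eq_zero.mp hΦn with h1 | h2
      · exact h1
      · exact absurd h2 this
    have := heq' n hn
    rw [hψn] at this
    have hεn : (ε n : ℂ) ≠ 0 := Complex.ofReal_ne_zero.mpr (hεne n hn)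
    exact (mul_eq_zero.mp this).resolve_left hεn
  -- extract the key equation
  have hgih : ((g:ℂ) - Complex.I * h) ≠ 0 := by
    intro H
    apply hh
    have := congrArg Complex.im H
    simpa using this
  have hexpne := Complex.exp_ne_zero (Complex.I * h * Ec N)
  have hkey : Complex.I * h * C + c0 = c0 * Complex.exp (Complex.I * h * Ec N) := by
    have hΦNval : (Complex.I * h * C + c0) * Complex.exp (-(Complex.I * h) * Ec N) = c0 := by
      conv_rhs => rw [← hΦN]
    have hinv : Complex.exp (-(Complex.I * h) * Ec N)
        = (Complex.exp (Complex.I * h * Ec N))⁻¹ := by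
      rw [neg_mul, Complex.exp_neg]
    rw [hinv] at hΦNval
    field_simp at hΦNval
    exact hΦNval
  have hEN : Ec N = ((∫ t in (1:ℝ)..N, 1 / ε t : ℝ) : ℂ) := rfl
  rw [div_eq_iff hgih]
  have hkey' : C * (Complex.I * h + (1/2) * ((g:ℂ) - Complex.I * h))
      = C * ((1/2) * ((g:ℂ) - Complex.I * h) * Complex.exp (Complex.I * h * Ec N)) := by
    rw [hc0] at hkey; linear_combination hkey
  have h2 := mul_left_cancel₀ hCne hkey'
  rw [← hEN]
  linear_combination 2 * h2
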